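/- Define F(s) = (1/vol(S^m)) ∫_{S^m} exp(s·cos²(d_p)) dvol for geodesic distance d_p on the unit m-sphere. Then F(0) = 1 and F satisfies F'(s)/F(s) ≤ 1/(m+1−2s) for 0 ≤ s < (m+1)/2; consequently F(t) ≤ √((m+1)/(m+1−2t)) for all 0 < t < (m+1)/2. -/

import Mathlib

open Real MeasureTheory

open intervalIntegral
open Real MeasureTheory intervalIntegral

-- test: derivative under the integral
lemma hasDerivAt_G (k : ℕ) (s : ℝ) :
    HasDerivAt (fun x : ℝ => ∫ u in (0:ℝ)..π, Real.exp (x * Real.cos u ^ 2) * Real.sin u ^ k)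
      (∫ u in (0:ℝ)..π, Real.cos u ^ 2 * Real.exp (s * Real.cos u ^ 2) * Real.sin u ^ k) s := by
  have hcont : ∀ x : ℝ, Continuous (fun u : ℝ => Real.exp (x * Real.cos u ^ 2) * Real.sin u ^ k) := by
    intro x; fun_prop
  have hcont' : ∀ x : ℝ, Continuous
      (fun u : ℝ => Real.cos u ^ 2 * Real.exp (x * Real.cos u ^ 2) * Real.sin u ^ k) := by
    intro x; fun_prop
  have := (intervalIntegral.hasDerivAt_integral_of_dominated_loc_of_deriv_le
      (F := fun x u => Real.exp (x * Real.cos u ^ 2) * Real.sin u ^ k)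
      (F' := fun x u => Real.cos u ^ 2 * Real.exp (x * Real.cos u ^ 2) * Real.sin u ^ k)
      (x₀ := s) (a := 0) (b := π) (μ := volume) (bound := fun _ => Real.exp (|s| + 1))
      (Metric.ball_mem_nhds s one_pos)
      (Filter.Eventually.of_forall fun x => (hcont x).aestronglyMeasurable)
      ((hcont s).intervalIntegrable 0 π)
      ((hcont' s).aestronglyMeasurable)
      ?_ (intervalIntegrable_const) ?_).2
  · exact this
  · refine Filter.Eventually.of_forall fun u _ x hx => ?_
    have h1 : |Real.cos u ^ 2| ≤ 1 := by
      rw [abs_of_nonneg (sq_nonneg _)]; exact Real.cos_sq_le_one u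
    have h2 : |Real.sin u ^ k| ≤ 1 := by
      rw [abs_pow]; exact pow_le_one₀ (abs_nonneg _) (Real.abs_sin_le_one u)
    have h3 : Real.exp (x * Real.cos u ^ 2) ≤ Real.exp (|s| + 1) := by
      apply Real.exp_le_exp.2
      have : |x| < |s| + 1 := by
        have := Metric.mem_ball.1 hx
        calc |x| ≤ |x - s| + |s| := by simpa using abs_add_le (x - s) s
          _ < |s| + 1 := by rw [Real.dist_eq] at this; linarith
      calc x * Real.cos u ^ 2 ≤ |x * Real.cos u ^ 2| := le_abs_self _
        _ = |x| * |Real.cos u ^ 2| := abs_mul _ _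
        _ ≤ (|s| + 1) * 1 := by
            apply mul_le_mul this.le h1 (abs_nonneg _) (by positivity)
        _ = |s| + 1 := mul_one _
    calc ‖Real.cos u ^ 2 * Real.exp (x * Real.cos u ^ 2) * Real.sin u ^ k‖
        = |Real.cos u ^ 2| * Real.exp (x * Real.cos u ^ 2) * |Real.sin u ^ k| := by
          rw [norm_mul, norm_mul]; simp [Real.norm_eq_abs, abs_of_pos (Real.exp_pos _)]
      _ ≤ 1 * Real.exp (|s| + 1) * 1 := by
          apply mul_le_mul (mul_le_mul h1 h3 (Real.exp_pos _).le one_pos.le) h2 (abs_nonneg _)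
          positivity
      _ = Real.exp (|s| + 1) := by ring
  · refine Filter.Eventually.of_forall fun u _ x _ => ?_
    have : HasDerivAt (fun x : ℝ => Real.exp (x * Real.cos u ^ 2))
        (Real.cos u ^ 2 * Real.exp (x * Real.cos u ^ 2)) x := by
      have := ((hasDerivAt_id x).mul_const (Real.cos u ^ 2)).exp
      simpa [mul_comm] using this
    simpa using this.mul_const (Real.sin u ^ k)
open Real MeasureTheory intervalIntegral

lemma apos_aux (k : ℕ) (s : ℝ) :
    0 < ∫ u in (0:ℝ)..π, Real.exp (s * Real.cos u ^ 2) * Real.sin u ^ k := by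
  apply intervalIntegral.intervalIntegral_pos_of_pos_on
  · exact Continuous.intervalIntegrable (by fun_prop) 0 π
  · intro x hx
    have := Real.sin_pos_of_pos_of_lt_pi hx.1 hx.2
    positivity
  · exact Real.pi_pos

lemma bnonneg_aux (k p : ℕ) (s : ℝ) :
    0 ≤ ∫ u in (0:ℝ)..π, Real.cos u ^ (2*p) * Real.exp (s * Real.cos u ^ 2) * Real.sin u ^ k := by
  apply intervalIntegral.integral_nonneg Real.pi_pos.le
  intro u hu
  have h1 : 0 ≤ Real.sin u := Real.sin_nonneg_of_nonneg_of_le_pi hu.1 hu.2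
  have h2 : (0:ℝ) ≤ Real.cos u ^ (2*p) := by
    rw [pow_mul]; positivity
  positivity
open Real MeasureTheory intervalIntegral

lemma ibp_key (k : ℕ) (s : ℝ) :
    (∫ u in (0:ℝ)..π, Real.exp (s * Real.cos u ^ 2) * Real.sin u ^ k)
      = ((k:ℝ) + 2 - 2 * s) * (∫ u in (0:ℝ)..π,
          Real.cos u ^ 2 * Real.exp (s * Real.cos u ^ 2) * Real.sin u ^ k)
        + 2 * s * ∫ u in (0:ℝ)..π,
          Real.cos u ^ 4 * Real.exp (s * Real.cos u ^ 2) * Real.sin u ^ k := by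
  set g : ℝ → ℝ := fun u => -Real.cos u * Real.sin u ^ (k+1) * Real.exp (s * Real.cos u ^ 2)
  set f : ℝ → ℝ := fun u =>
    (Real.exp (s * Real.cos u ^ 2) * Real.sin u ^ k)
      - ((k:ℝ) + 2 - 2 * s) * (Real.cos u ^ 2 * Real.exp (s * Real.cos u ^ 2) * Real.sin u ^ k)
      - 2 * s * (Real.cos u ^ 4 * Real.exp (s * Real.cos u ^ 2) * Real.sin u ^ k) with hf
  have hderiv : ∀ u ∈ Set.uIcc (0:ℝ) π, HasDerivAt g (f u) u := by
    intro u _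
    have h1 : HasDerivAt (fun u => -Real.cos u) (Real.sin u) u := by
      simpa using (Real.hasDerivAt_cos u).fun_neg
    have h2 : HasDerivAt (fun u => Real.sin u ^ (k+1))
        (((k:ℝ)+1) * Real.sin u ^ k * Real.cos u) u := by
      simpa using (Real.hasDerivAt_sin u).fun_pow (k+1)
    have h3 : HasDerivAt (fun u => Real.exp (s * Real.cos u ^ 2))
        (Real.exp (s * Real.cos u ^ 2) * (s * (2 * Real.cos u * (-Real.sin u)))) u := by
      have : HasDerivAt (fun u => s * Real.cos u ^ 2) (s * (2 * Real.cos u * (-Real.sin u))) u := by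
        simpa [mul_assoc] using ((Real.hasDerivAt_cos u).pow 2).const_mul s
      exact this.exp
    have := (h1.fun_mul h2).fun_mul h3
    refine this.congr_deriv ?_
    symm
    have hsin2 : Real.sin u ^ 2 = 1 - Real.cos u ^ 2 := Real.sin_sq u
    have e1 : Real.sin u ^ (k+1) = Real.sin u ^ k * Real.sin u := pow_succ _ _
    have e2 : Real.sin u ^ (k+2) = Real.sin u ^ k * Real.sin u ^ 2 := by ring
    simp only [hf]
    linear_combination (-(Real.exp (s * Real.cos u ^ 2) * Real.sin u ^ k)
      * (1 + 2 * s * Real.cos u ^ 2)) * hsin2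
  have hfint : IntervalIntegrable f volume 0 π := by
    apply Continuous.intervalIntegrable; fun_prop
  have h0 : ∫ u in (0:ℝ)..π, f u = g π - g 0 :=
    intervalIntegral.integral_eq_sub_of_hasDerivAt hderiv hfint
  have hg : g π - g 0 = 0 := by
    simp [g, Real.sin_pi, Real.sin_zero, zero_pow (Nat.succ_ne_zero k)]
  have hsplit : ∫ u in (0:ℝ)..π, f u
      = (∫ u in (0:ℝ)..π, Real.exp (s * Real.cos u ^ 2) * Real.sin u ^ k)
        - ((k:ℝ) + 2 - 2 * s) * (∫ u in (0:ℝ)..π,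
            Real.cos u ^ 2 * Real.exp (s * Real.cos u ^ 2) * Real.sin u ^ k)
        - 2 * s * ∫ u in (0:ℝ)..π,
            Real.cos u ^ 4 * Real.exp (s * Real.cos u ^ 2) * Real.sin u ^ k := by
    rw [hf]
    rw [intervalIntegral.integral_sub, intervalIntegral.integral_sub,
      intervalIntegral.integral_const_mul, intervalIntegral.integral_const_mul]
    · exact Continuous.intervalIntegrable (by fun_prop) 0 π
    · exact Continuous.intervalIntegrable (by fun_prop) 0 π
    · apply IntervalIntegrable.sub <;> exact Continuous.intervalIntegrable (by fun_prop) 0 π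
    · exact Continuous.intervalIntegrable (by fun_prop) 0 π
  rw [hsplit, hg] at h0
  linarith

/-- For `F(s) = (1/vol S^m) ∫_{S^m} exp(s cos²(d_p))`, equivalently
`F(s) = (∫_0^π e^{s cos²u} sin^{m-1}u du)/(∫_0^π sin^{m-1}u du)`: one has `F(0) = 1`,
`F'(s)/F(s) ≤ 1/(m+1-2s)` for `0 ≤ s < (m+1)/2`, and consequently
`F(t) ≤ √((m+1)/(m+1-2t))` for `0 < t < (m+1)/2`. -/
theorem exp_cos_sq_moment_bound (m : ℕ) (hm : 1 ≤ m) (F : ℝ → ℝ)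
    (hF : ∀ s, F s = (∫ u in (0 : ℝ)..π, Real.exp (s * Real.cos u ^ 2)
        * Real.sin u ^ (m - 1)) / ∫ u in (0 : ℝ)..π, Real.sin u ^ (m - 1)) :
    F 0 = 1 ∧
    (∀ s : ℝ, 0 ≤ s → s < ((m : ℝ) + 1) / 2 →
      deriv F s / F s ≤ 1 / ((m : ℝ) + 1 - 2 * s)) ∧
    (∀ t : ℝ, 0 < t → t < ((m : ℝ) + 1) / 2 →
      F t ≤ Real.sqrt (((m : ℝ) + 1) / ((m : ℝ) + 1 - 2 * t))) := by
  obtain ⟨k, rfl⟩ : ∃ k, m = k + 1 := ⟨m - 1, (Nat.succ_pred_eq_of_pos hm).symm⟩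
  simp only [Nat.add_sub_cancel] at hF
  have hmc : ((k + 1 : ℕ) : ℝ) + 1 = (k : ℝ) + 2 := by push_cast; ring
  set A : ℝ → ℝ := fun s => ∫ u in (0:ℝ)..π, Real.exp (s * Real.cos u ^ 2) * Real.sin u ^ k
    with hA
  set B : ℝ → ℝ := fun s =>
    ∫ u in (0:ℝ)..π, Real.cos u ^ 2 * Real.exp (s * Real.cos u ^ 2) * Real.sin u ^ k with hB
  have hApos : ∀ s, 0 < A s := fun s => apos_aux k s
  have hBnonneg : ∀ s, 0 ≤ B s := fun s => by
    simpa using bnonneg_aux k 1 s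
  have hCnonneg : ∀ s, 0 ≤ ∫ u in (0:ℝ)..π,
      Real.cos u ^ 4 * Real.exp (s * Real.cos u ^ 2) * Real.sin u ^ k := fun s => by
    simpa using bnonneg_aux k 2 s
  have hkey : ∀ s : ℝ, 0 ≤ s → ((k:ℝ) + 2 - 2 * s) * B s ≤ A s := by
    intro s hs
    have := ibp_key k s
    nlinarith [hCnonneg s]
  set D : ℝ := ∫ u in (0:ℝ)..π, Real.sin u ^ k with hD
  have hDA : D = A 0 := by
    rw [hA, hD]
    apply intervalIntegral.integral_congr
    intro u _; simp
  have hDpos : 0 < D := hDA ▸ hApos 0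
  have hFeq : F = fun s => A s / D := by funext s; rw [hF s]
  have hFderiv : ∀ s, HasDerivAt F (B s / D) s := by
    intro s; rw [hFeq]
    exact (hasDerivAt_G k s).div_const D
  have hFpos : ∀ s, 0 < F s := fun s => by
    rw [hFeq]; exact div_pos (hApos s) hDpos
  have hF0 : F 0 = 1 := by rw [hFeq]; simp only [← hDA]; field_simp
  refine ⟨hF0, ?_, ?_⟩
  · intro s hs hs2
    rw [hmc] at hs2 ⊢
    have hc : 0 < (k:ℝ) + 2 - 2 * s := by linarith
    have hfs : F s = A s / D := by rw [hFeq]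
    have h2 : deriv F s / F s = B s / A s := by
      rw [(hFderiv s).deriv, hfs]
      rw [div_div_div_cancel_right₀]
      exact hDpos.ne'
    rw [h2, div_le_div_iff₀ (hApos s) hc]
    nlinarith [hkey s hs]
  · intro t ht ht2
    rw [hmc] at ht2 ⊢
    have hc : 0 < (k:ℝ) + 2 - 2 * t := by linarith
    set φ : ℝ → ℝ := fun x => F x ^ 2 * ((k:ℝ) + 2 - 2 * x) with hφ
    have hφderiv : ∀ x, HasDerivAt φ
        (2 * F x ^ 1 * (B x / D) * ((k:ℝ) + 2 - 2 * x) + F x ^ 2 * (-2)) x := by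
      intro x
      have hlin : HasDerivAt (fun x : ℝ => (k:ℝ) + 2 - 2 * x) (-2) x := by
        simpa using ((hasDerivAt_id x).const_mul (2:ℝ)).const_sub ((k:ℝ) + 2)
      exact ((hFderiv x).pow 2).mul hlin
    have hanti : AntitoneOn φ (Set.Icc 0 t) := by
      apply antitoneOn_of_deriv_nonpos (convex_Icc 0 t)
      · exact fun x _ => ((hφderiv x).continuousAt).continuousWithinAt
      · intro x _
        exact (hφderiv x).differentiableAt.differentiableWithinAt
      · intro x hx
        rw [interior_Icc] at hx
        rw [(hφderiv x).deriv]
        have hkx := hkey x hx.1.le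
        have hFx := hFpos x
        have h1 : ((k:ℝ) + 2 - 2 * x) * (B x / D) ≤ F x := by
          have hFxD : F x = A x / D := by rw [hFeq]
          rw [hFxD, ← mul_div_assoc, div_le_div_iff₀ hDpos hDpos]
          nlinarith [hkx, hDpos]
        have hBD : 0 ≤ B x / D := div_nonneg (hBnonneg x) hDpos.le
        nlinarith [mul_le_mul_of_nonneg_left h1 hFx.le, hFx]
    have h01 : (0:ℝ) ∈ Set.Icc (0:ℝ) t := Set.mem_Icc.2 ⟨le_refl _, ht.le⟩
    have ht1 : t ∈ Set.Icc (0:ℝ) t := Set.mem_Icc.2 ⟨ht.le, le_refl _⟩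
    have hsq : F t ^ 2 ≤ ((k:ℝ) + 2) / ((k:ℝ) + 2 - 2 * t) := by
      rw [le_div_iff₀ hc]
      have h := hanti h01 ht1 ht.le
      simp only [hφ, hF0] at h
      nlinarith [h]
    rw [Real.le_sqrt (hFpos t).le (div_nonneg (by positivity) hc.le)]
    exact hsq
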